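/- Let n ≥ 3 and let G, C, D, x, y be as in the auxiliary digraph setup with δ(G_i) ≥ ⌈(n+1)/2⌉ for all i ∈ [2n-1]. If d⁻_D(y) ≥ ⌊n/2⌋, then there exists a G-transversal isomorphic to a Hamiltonian path between x and y. -/

import Mathlib

open Finset

variable {V : Type*} [DecidableEq V]

/-- `v 0, …, v len` is a path whose `i`-th edge `v i – v (i+1)` lies in `G (φ i)`,
with pairwise distinct labels `φ i ∈ {1, …, s}`. -/
def IsRainbowPath (G : ℕ → SimpleGraph V) (s len : ℕ) (v : ℕ → V) (φ : ℕ → ℕ) : Prop :=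
  Set.InjOn v (Set.Iic len) ∧ Set.InjOn φ (Set.Iio len) ∧
  (∀ i < len, 1 ≤ φ i ∧ φ i ≤ s) ∧
  ∀ i < len, (G (φ i)).Adj (v i) (v (i + 1))

/-- a rainbow (partial transversal) cycle with `len` edges. -/
def IsRainbowCycle (G : ℕ → SimpleGraph V) (s len : ℕ) (v : ℕ → V) (φ : ℕ → ℕ) : Prop :=
  Set.InjOn v (Set.Iio len) ∧ v len = v 0 ∧ Set.InjOn φ (Set.Iio len) ∧
  (∀ i < len, 1 ≤ φ i ∧ φ i ≤ s) ∧
  ∀ i < len, (G (φ i)).Adj (v i) (v (i + 1))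

/-- the collection `G 1, …, G s` has a (partial) transversal Hamiltonian path
on the `2n` vertices. -/
def HasRainbowHamPath (G : ℕ → SimpleGraph V) (s n : ℕ) : Prop :=
  ∃ v : ℕ → V, ∃ φ : ℕ → ℕ,
    IsRainbowPath G s (2 * n - 1) v φ ∧ ∀ w : V, ∃ i ≤ 2 * n - 1, v i = w

/-- a transversal Hamiltonian path with endpoints `x` and `y`. -/
def HasRainbowHamPathBetween (G : ℕ → SimpleGraph V) (s n : ℕ) (x y : V) : Prop :=
  ∃ v : ℕ → V, ∃ φ : ℕ → ℕ,
    IsRainbowPath G s (2 * n - 1) v φ ∧ v 0 = x ∧ v (2 * n - 1) = y ∧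
    ∀ w : V, ∃ i ≤ 2 * n - 1, v i = w

/-- every `G i`, `1 ≤ i ≤ s`, equals `K_{n/2,n/2} ∪ K_{n/2,n/2}` with respect to a common
partition `X = X1 ∪ X2`, `Y = Y1 ∪ Y2`. -/
def AllTwoCompleteBip (G : ℕ → SimpleGraph V) (s n : ℕ) (X Y : Finset V) : Prop :=
  ∃ X1 X2 Y1 Y2 : Finset V,
    Disjoint X1 X2 ∧ Disjoint Y1 Y2 ∧ X1 ∪ X2 = X ∧ Y1 ∪ Y2 = Y ∧
    X1.card = n / 2 ∧ X2.card = n / 2 ∧ Y1.card = n / 2 ∧ Y2.card = n / 2 ∧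
    ∀ i, 1 ≤ i → i ≤ s → ∀ a b : V,
      (G i).Adj a b ↔ ((a ∈ X1 ∧ b ∈ Y1) ∨ (b ∈ X1 ∧ a ∈ Y1) ∨
                       (a ∈ X2 ∧ b ∈ Y2) ∨ (b ∈ X2 ∧ a ∈ Y2))

/-- the adjacency relation of the graph `F`: all edges from `xs` to `Y1 ∪ Y2`,
all edges from `ys` to `X1 ∪ X2`, and all edges between `Xj` and `Yj`, `j = 1, 2`. -/
def FAdj (xs ys : V) (X1 X2 Y1 Y2 : Finset V) (a b : V) : Prop :=
  (a = xs ∧ b ∈ Y1 ∪ Y2) ∨ (b = xs ∧ a ∈ Y1 ∪ Y2) ∨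
  (a = ys ∧ b ∈ X1 ∪ X2) ∨ (b = ys ∧ a ∈ X1 ∪ X2) ∨
  (a ∈ X1 ∧ b ∈ Y1) ∨ (b ∈ X1 ∧ a ∈ Y1) ∨
  (a ∈ X2 ∧ b ∈ Y2) ∨ (b ∈ X2 ∧ a ∈ Y2)

/-- `G0` is one of the exceptional graphs `F`, `F'` on the bipartition `(X, Y)`. -/
def IsFOrF' (G0 : SimpleGraph V) (X Y : Finset V) (n : ℕ) : Prop :=
  ∃ xs ys : V, ∃ X1 X2 Y1 Y2 : Finset V,
    xs ∈ X ∧ ys ∈ Y ∧ Disjoint X1 X2 ∧ Disjoint Y1 Y2 ∧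
    xs ∉ X1 ∪ X2 ∧ ys ∉ Y1 ∪ Y2 ∧
    insert xs (X1 ∪ X2) = X ∧ insert ys (Y1 ∪ Y2) = Y ∧
    X1.card = (n - 1) / 2 ∧ X2.card = (n - 1) / 2 ∧
    Y1.card = (n - 1) / 2 ∧ Y2.card = (n - 1) / 2 ∧
    ((∀ a b : V, G0.Adj a b ↔ FAdj xs ys X1 X2 Y1 Y2 a b) ∨
     (∀ a b : V, G0.Adj a b ↔
        (FAdj xs ys X1 X2 Y1 Y2 a b ∨ (a = xs ∧ b = ys) ∨ (a = ys ∧ b = xs))))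

/-- in-degree of `w` in the auxiliary digraph `D`: the number of odd `i ∈ [1, 2n-3]`
with `u i w ∈ E(G i)` and `w ≠ u (i+1)`. -/
noncomputable def inDegD (G : ℕ → SimpleGraph V) (n : ℕ) (u : ℕ → V) (w : V) : ℕ :=
  {i : ℕ | Odd i ∧ 1 ≤ i ∧ i ≤ 2 * n - 3 ∧ (G i).Adj (u i) w ∧ w ≠ u (i + 1)}.ncard


lemma mod_eq_near {M A B : ℕ} (h : A % M = B % M) (h1 : A < B + M) (h2 : B < A + M) :
    A = B := by
  rcases le_total A B with hle | hle
  · have hd : M ∣ B - A := (Nat.modEq_iff_dvd' hle).mp h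
    rcases Nat.eq_zero_or_pos (B - A) with h0 | h0
    · omega
    · have := Nat.le_of_dvd h0 hd; omega
  · have hd : M ∣ A - B := (Nat.modEq_iff_dvd' hle).mp h.symm
    rcases Nat.eq_zero_or_pos (A - B) with h0 | h0
    · omega
    · have := Nat.le_of_dvd h0 hd; omega

/-- descending walk index: `sigA N2 k r` is the `r`-th vertex index when walking
backwards along the cycle starting at `k`. -/
def sigA (N2 k r : ℕ) : ℕ := (k + N2 - r) % N2 + 1

/-- ascending walk index. -/
def tauA (N2 k s : ℕ) : ℕ := (k + s - 1) % N2 + 1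

lemma sigA_bounds {N2 : ℕ} (hN2 : 0 < N2) (k r : ℕ) :
    1 ≤ sigA N2 k r ∧ sigA N2 k r ≤ N2 := by
  have := Nat.mod_lt (k + N2 - r) hN2
  simp only [sigA]; omega

lemma tauA_bounds {N2 : ℕ} (hN2 : 0 < N2) (k s : ℕ) :
    1 ≤ tauA N2 k s ∧ tauA N2 k s ≤ N2 := by
  have := Nat.mod_lt (k + s - 1) hN2
  simp only [tauA]; omega

lemma sigA_inj {N2 k a b : ℕ} (hN2 : 0 < N2) (ha : a ≤ k + N2) (hb : b ≤ k + N2)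
    (hab : a < b + N2) (hba : b < a + N2) (h : sigA N2 k a = sigA N2 k b) : a = b := by
  simp only [sigA] at h
  have h' : (k + N2 - a) % N2 = (k + N2 - b) % N2 := by omega
  have := mod_eq_near h' (by omega) (by omega)
  omega

lemma tauA_inj {N2 k a b : ℕ} (hN2 : 0 < N2) (ha : 1 ≤ a) (hb : 1 ≤ b)
    (hab : a < b + N2) (hba : b < a + N2) (h : tauA N2 k a = tauA N2 k b) : a = b := by
  simp only [tauA] at h
  have h' : (k + a - 1) % N2 = (k + b - 1) % N2 := by omega
  have := mod_eq_near h' (by omega) (by omega)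
  omega

lemma sig_tau {N2 k a s : ℕ} (hN2 : 0 < N2) (ha : 1 ≤ a) (ha2 : a ≤ N2)
    (hs : 1 ≤ s) (hs2 : s ≤ N2) (hk : 1 ≤ k) (h : sigA N2 k a = tauA N2 k s) :
    a + s = N2 + 1 := by
  simp only [sigA, tauA] at h
  have h' : (k + N2 - a) % N2 = (k + s - 1) % N2 := by omega
  have := mod_eq_near h' (by omega) (by omega)
  omega

lemma sigA_one {N2 k : ℕ} (hN2 : 0 < N2) (hk1 : 1 ≤ k) (hk2 : k ≤ N2) :
    sigA N2 k 1 = k := by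
  simp only [sigA]
  rw [show k + N2 - 1 = (k - 1) + N2 by omega, Nat.add_mod_right,
    Nat.mod_eq_of_lt (by omega)]
  omega

lemma sigA_top {N2 k : ℕ} (hN2 : 0 < N2) (hk1 : 1 ≤ k) (hk2 : k ≤ N2) :
    sigA N2 k (N2 + 1) = k := by
  simp only [sigA]
  rw [show k + N2 - (N2 + 1) = k - 1 by omega, Nat.mod_eq_of_lt (by omega)]
  omega

lemma sigA_N2 {N2 k : ℕ} : sigA N2 k N2 = k % N2 + 1 := by
  simp only [sigA]
  rw [show k + N2 - N2 = k by omega]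

lemma tauA_one {N2 k : ℕ} : tauA N2 k 1 = k % N2 + 1 := by
  simp only [tauA]
  rw [show k + 1 - 1 = k by omega]

lemma tauA_last {N2 k : ℕ} (hN2 : 0 < N2) (hk1 : 1 ≤ k) (hk2 : k ≤ N2) :
    tauA N2 k N2 = k := by
  simp only [tauA]
  rw [show k + N2 - 1 = (k - 1) + N2 by omega, Nat.add_mod_right,
    Nat.mod_eq_of_lt (by omega)]
  omega

lemma sigA_val {N2 i k p : ℕ} (hN2 : 0 < N2) (hi : i < N2) (hp : p ≤ k + N2)
    (h : i + p = k ∨ i + p = k + N2) : sigA N2 k p = i + 1 := by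
  simp only [sigA]
  rcases h with h | h
  · rw [show k + N2 - p = i + N2 by omega, Nat.add_mod_right, Nat.mod_eq_of_lt hi]
  · rw [show k + N2 - p = i by omega, Nat.mod_eq_of_lt hi]

lemma tauA_val {N2 i k q : ℕ} (hN2 : 0 < N2) (hi1 : 1 ≤ i) (hi : i ≤ N2)
    (hq1 : 1 ≤ q) (h : i = k + q ∨ i + N2 = k + q) : tauA N2 k q = i := by
  simp only [tauA]
  rcases h with h | h
  · rw [show k + q - 1 = i - 1 by omega, Nat.mod_eq_of_lt (by omega)]; omega
  · rw [show k + q - 1 = (i - 1) + N2 by omega, Nat.add_mod_right,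
      Nat.mod_eq_of_lt (by omega)]; omega

lemma cycle_step {V : Type*} (n : ℕ) (hn : 3 ≤ n) (G : ℕ → SimpleGraph V) (u : ℕ → V)
    (hC : ∀ i, 1 ≤ i → i ≤ 2 * n - 3 → (G i).Adj (u i) (u (i + 1)))
    (hC2 : (G (2 * n - 2)).Adj (u (2 * n - 2)) (u 1)) (m : ℕ) :
    (G (m % (2 * n - 2) + 1)).Adj (u (m % (2 * n - 2) + 1)) (u ((m + 1) % (2 * n - 2) + 1)) := by
  have hm : m % (2 * n - 2) < 2 * n - 2 := Nat.mod_lt _ (by omega)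
  have hadd : (m + 1) % (2 * n - 2) = (m % (2 * n - 2) + 1) % (2 * n - 2) := by
    rw [Nat.add_mod, Nat.mod_eq_of_lt (show 1 < 2 * n - 2 by omega)]
  rcases Nat.lt_or_ge (m % (2 * n - 2) + 1) (2 * n - 2) with hlt | hge
  · rw [hadd, Nat.mod_eq_of_lt hlt]
    exact hC _ (by omega) (by omega)
  · have he : m % (2 * n - 2) + 1 = 2 * n - 2 := by omega
    rw [hadd, he, Nat.mod_self]
    simpa [he] using hC2

lemma sig_step {V : Type*} (n : ℕ) (hn : 3 ≤ n) (G : ℕ → SimpleGraph V) (u : ℕ → V)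
    (hC : ∀ i, 1 ≤ i → i ≤ 2 * n - 3 → (G i).Adj (u i) (u (i + 1)))
    (hC2 : (G (2 * n - 2)).Adj (u (2 * n - 2)) (u 1)) (k r : ℕ) (hk : 1 ≤ k) (hr : 1 ≤ r)
    (hr2 : r ≤ 2 * n - 2) :
    (G (sigA (2 * n - 2) k (r + 1))).Adj (u (sigA (2 * n - 2) k r))
      (u (sigA (2 * n - 2) k (r + 1))) := by
  have key := (cycle_step n hn G u hC hC2 (k + (2 * n - 2) - (r + 1))).symm
  have e1 : k + (2 * n - 2) - (r + 1) + 1 = k + (2 * n - 2) - r := by omega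
  rw [e1] at key
  simpa only [sigA] using key

lemma tau_step {V : Type*} (n : ℕ) (hn : 3 ≤ n) (G : ℕ → SimpleGraph V) (u : ℕ → V)
    (hC : ∀ i, 1 ≤ i → i ≤ 2 * n - 3 → (G i).Adj (u i) (u (i + 1)))
    (hC2 : (G (2 * n - 2)).Adj (u (2 * n - 2)) (u 1)) (k s : ℕ) (hk : 1 ≤ k) (hs : 1 ≤ s) :
    (G (tauA (2 * n - 2) k s)).Adj (u (tauA (2 * n - 2) k s))
      (u (tauA (2 * n - 2) k (s + 1))) := by
  have key := cycle_step n hn G u hC hC2 (k + s - 1)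
  have e1 : k + s - 1 + 1 = k + (s + 1) - 1 := by omega
  rw [e1] at key
  simpa only [tauA] using key

lemma build_path (n : ℕ) (hn : 3 ≤ n) (G : ℕ → SimpleGraph V) (X Y : Finset V)
    (hdisj : Disjoint X Y) (hcov : ∀ w : V, w ∈ X ∨ w ∈ Y)
    (hX : X.card = n) (hY : Y.card = n)
    (u : ℕ → V) (x y : V)
    (huinj : Set.InjOn u (Set.Icc 1 (2 * n - 2)))
    (hxX : x ∈ X) (hyY : y ∈ Y)
    (huxy : ∀ i, 1 ≤ i → i ≤ 2 * n - 2 → u i ≠ x ∧ u i ≠ y)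
    (g c : ℕ → ℕ)
    (hg : ∀ r, 1 ≤ r → r ≤ 2 * n - 2 → 1 ≤ g r ∧ g r ≤ 2 * n - 2)
    (hginj : ∀ a b, 1 ≤ a → a ≤ 2 * n - 2 → 1 ≤ b → b ≤ 2 * n - 2 → g a = g b → a = b)
    (hc : ∀ r, r ≤ 2 * n - 2 → 1 ≤ c r ∧ c r ≤ 2 * n - 1)
    (hcinj : ∀ a b, a ≤ 2 * n - 2 → b ≤ 2 * n - 2 → c a = c b → a = b)
    (hadj0 : (G (c 0)).Adj x (u (g 1)))
    (hadjm : ∀ r, 1 ≤ r → r ≤ 2 * n - 3 → (G (c r)).Adj (u (g r)) (u (g (r + 1))))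
    (hadjl : (G (c (2 * n - 2))).Adj (u (g (2 * n - 2))) y) :
    HasRainbowHamPathBetween G (2 * n - 1) n x y := by
  have hxy : x ≠ y := by
    intro h; exact Finset.disjoint_left.mp hdisj hxX (h ▸ hyY)
  set v : ℕ → V := fun r => if r = 0 then x else if r = 2 * n - 1 then y else u (g r) with hv
  have hN0 : 2 * n - 1 ≠ 0 := by omega
  have hv0 : v 0 = x := by simp [hv]
  have hvN : v (2 * n - 1) = y := by simp [hv, hN0]
  have hvm : ∀ r, 1 ≤ r → r ≤ 2 * n - 2 → v r = u (g r) := by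
    intro r h1 h2
    have e0 : r ≠ 0 := by omega
    have e1 : r ≠ 2 * n - 1 := by omega
    simp [hv, e0, e1]
  have hvinj : Set.InjOn v (Set.Iic (2 * n - 1)) := by
    intro a ha b hb hab
    simp only [Set.mem_Iic] at ha hb
    rcases eq_or_ne a 0 with rfl | ha0 <;> rcases eq_or_ne b 0 with rfl | hb0
    · rfl
    · rcases eq_or_ne b (2 * n - 1) with rfl | hbN
      · rw [hv0, hvN] at hab; exact absurd hab hxy
      · have hb' := hg b (by omega) (by omega)
        rw [hv0, hvm b (by omega) (by omega)] at hab
        exact absurd hab.symm (huxy _ hb'.1 hb'.2).1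
    · rcases eq_or_ne a (2 * n - 1) with rfl | haN
      · rw [hv0, hvN] at hab; exact absurd hab.symm hxy
      · have ha' := hg a (by omega) (by omega)
        rw [hv0, hvm a (by omega) (by omega)] at hab
        exact absurd hab (huxy _ ha'.1 ha'.2).1
    · rcases eq_or_ne a (2 * n - 1) with rfl | haN <;> rcases eq_or_ne b (2 * n - 1) with rfl | hbN
      · rfl
      · have hb' := hg b (by omega) (by omega)
        rw [hvN, hvm b (by omega) (by omega)] at hab
        exact absurd hab.symm (huxy _ hb'.1 hb'.2).2
      · have ha' := hg a (by omega) (by omega)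
        rw [hvN, hvm a (by omega) (by omega)] at hab
        exact absurd hab (huxy _ ha'.1 ha'.2).2
      · have ha' := hg a (by omega) (by omega)
        have hb' := hg b (by omega) (by omega)
        rw [hvm a (by omega) (by omega), hvm b (by omega) (by omega)] at hab
        have := huinj (Set.mem_Icc.mpr ⟨ha'.1, ha'.2⟩) (Set.mem_Icc.mpr ⟨hb'.1, hb'.2⟩) hab
        exact hginj a b (by omega) (by omega) (by omega) (by omega) this
  have hφinj : Set.InjOn c (Set.Iio (2 * n - 1)) := by
    intro a ha b hb hab
    simp only [Set.mem_Iio] at ha hb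
    exact hcinj a b (by omega) (by omega) hab
  have hadj : ∀ r, r < 2 * n - 1 → (G (c r)).Adj (v r) (v (r + 1)) := by
    intro r hr
    rcases Nat.eq_zero_or_pos r with rfl | hr1
    · rw [hv0, show (0:ℕ) + 1 = 1 from rfl, hvm 1 (by omega) (by omega)]
      exact hadj0
    · rcases eq_or_ne r (2 * n - 2) with rfl | hrN
      · rw [hvm _ (by omega) (le_refl _), show 2 * n - 2 + 1 = 2 * n - 1 by omega, hvN]
        exact hadjl
      · rw [hvm r (by omega) (by omega), hvm (r + 1) (by omega) (by omega)]
        exact hadjm r (by omega) (by omega)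
  have hcover : ∀ w : V, ∃ r ≤ 2 * n - 1, v r = w := by
    have hicard : ((Finset.range (2 * n)).image v).card = 2 * n := by
      rw [Finset.card_image_of_injOn, Finset.card_range]
      intro a ha b hb hab
      simp only [Finset.coe_range, Set.mem_Iio] at ha hb
      exact hvinj (Set.mem_Iic.mpr (by omega)) (Set.mem_Iic.mpr (by omega)) hab
    have himsub : (Finset.range (2 * n)).image v ⊆ X ∪ Y := by
      intro w _
      rcases hcov w with h | h
      · exact Finset.mem_union_left _ h
      · exact Finset.mem_union_right _ h
    have hXYcard : (X ∪ Y).card = 2 * n := by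
      rw [Finset.card_union_of_disjoint hdisj, hX, hY]; ring
    have heq : (Finset.range (2 * n)).image v = X ∪ Y :=
      Finset.eq_of_subset_of_card_le himsub (by omega)
    intro w
    have hw : w ∈ (Finset.range (2 * n)).image v := by
      rw [heq]
      rcases hcov w with h | h
      · exact Finset.mem_union_left _ h
      · exact Finset.mem_union_right _ h
    obtain ⟨r, hr, hrw⟩ := Finset.mem_image.mp hw
    refine ⟨r, ?_, hrw⟩
    simp only [Finset.mem_range] at hr
    omega
  exact ⟨v, c, ⟨hvinj, hφinj, fun i hi => hc i (by omega), hadj⟩, hv0, hvN, hcover⟩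

lemma buildA2 (n : ℕ) (hn : 3 ≤ n) (G : ℕ → SimpleGraph V) (X Y : Finset V)
    (hdisj : Disjoint X Y) (hcov : ∀ w : V, w ∈ X ∨ w ∈ Y)
    (hX : X.card = n) (hY : Y.card = n)
    (u : ℕ → V) (x y : V)
    (huinj : Set.InjOn u (Set.Icc 1 (2 * n - 2)))
    (hxX : x ∈ X) (hyY : y ∈ Y)
    (huxy : ∀ i, 1 ≤ i → i ≤ 2 * n - 2 → u i ≠ x ∧ u i ≠ y)
    (hC : ∀ i, 1 ≤ i → i ≤ 2 * n - 3 → (G i).Adj (u i) (u (i + 1)))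
    (hC2 : (G (2 * n - 2)).Adj (u (2 * n - 2)) (u 1))
    (k : ℕ) (hk1 : 1 ≤ k) (hk2 : k ≤ 2 * n - 2)
    (hxk : (G (2 * n - 1)).Adj x (u k))
    (hky : (G k).Adj (u (k % (2 * n - 2) + 1)) y) :
    HasRainbowHamPathBetween G (2 * n - 1) n x y := by
  have hN2 : 0 < 2 * n - 2 := by omega
  refine build_path n hn G X Y hdisj hcov hX hY u x y huinj hxX hyY huxy
    (fun r => sigA (2 * n - 2) k r)
    (fun r => if r = 0 then 2 * n - 1 else sigA (2 * n - 2) k (r + 1))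
    ?_ ?_ ?_ ?_ ?_ ?_ ?_
  · intro r _ _; exact sigA_bounds hN2 k r
  · intro a b h1 h2 h3 h4 h
    exact sigA_inj hN2 (by omega) (by omega) (by omega) (by omega) h
  · intro r hr
    by_cases h0 : r = 0
    · simp only [if_pos h0]; omega
    · simp only [if_neg h0]
      have := sigA_bounds hN2 k (r + 1)
      omega
  · intro a b ha hb h
    by_cases h0 : a = 0 <;> by_cases h1 : b = 0
    · omega
    · exfalso
      simp only [if_pos h0, if_neg h1] at h
      have := sigA_bounds hN2 k (b + 1); omega
    · exfalso
      simp only [if_pos h1, if_neg h0] at h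
      have := sigA_bounds hN2 k (a + 1); omega
    · simp only [if_neg h0, if_neg h1] at h
      have := sigA_inj hN2 (show a + 1 ≤ k + (2 * n - 2) by omega)
        (show b + 1 ≤ k + (2 * n - 2) by omega) (by omega) (by omega) h
      omega
  · simp only [if_pos rfl, sigA_one hN2 hk1 hk2]
    exact hxk
  · intro r h1 h2
    have h0 : r ≠ 0 := by omega
    simp only [if_neg h0]
    exact sig_step n hn G u hC hC2 k r hk1 (by omega) (by omega)
  · have h0 : (2 * n - 2 : ℕ) ≠ 0 := by omega
    simp only [if_neg h0]
    rw [sigA_top hN2 hk1 hk2, sigA_N2]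
    exact hky

lemma buildC1 (n : ℕ) (hn : 3 ≤ n) (G : ℕ → SimpleGraph V) (X Y : Finset V)
    (hdisj : Disjoint X Y) (hcov : ∀ w : V, w ∈ X ∨ w ∈ Y)
    (hX : X.card = n) (hY : Y.card = n)
    (u : ℕ → V) (x y : V)
    (huinj : Set.InjOn u (Set.Icc 1 (2 * n - 2)))
    (hxX : x ∈ X) (hyY : y ∈ Y)
    (huxy : ∀ i, 1 ≤ i → i ≤ 2 * n - 2 → u i ≠ x ∧ u i ≠ y)
    (hC : ∀ i, 1 ≤ i → i ≤ 2 * n - 3 → (G i).Adj (u i) (u (i + 1)))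
    (hC2 : (G (2 * n - 2)).Adj (u (2 * n - 2)) (u 1))
    (i k : ℕ) (hi1 : 1 ≤ i) (hi2 : i ≤ 2 * n - 3) (hk1 : 1 ≤ k) (hk2 : k ≤ 2 * n - 2)
    (hik : i ≠ k)
    (hxk : (G (2 * n - 1)).Adj x (u k))
    (hiy : (G i).Adj (u i) y)
    (hchord : (G k).Adj (u (i + 1)) (u (k % (2 * n - 2) + 1))) :
    HasRainbowHamPathBetween G (2 * n - 1) n x y := by
  have hN2 : 0 < 2 * n - 2 := by omega
  obtain ⟨p, hp2, hp1, hpN⟩ :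
      ∃ p, (i + p = k ∨ i + p = k + (2 * n - 2)) ∧ 1 ≤ p ∧ p ≤ 2 * n - 2 - 1 := by
    refine ⟨(k + (2 * n - 2) - i - 1) % (2 * n - 2) + 1, ?_, by omega, ?_⟩
    · rcases Nat.lt_or_ge (k + (2 * n - 2) - i - 1) (2 * n - 2) with hlt | hge
      · right; rw [Nat.mod_eq_of_lt hlt]; omega
      · left; rw [Nat.mod_eq_sub_mod hge, Nat.mod_eq_of_lt (by omega)]; omega
    · rcases Nat.lt_or_ge (k + (2 * n - 2) - i - 1) (2 * n - 2) with hlt | hge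
      · rw [Nat.mod_eq_of_lt hlt]; omega
      · rw [Nat.mod_eq_sub_mod hge, Nat.mod_eq_of_lt (by omega)]; omega
  have hσp : sigA (2 * n - 2) k p = i + 1 :=
    sigA_val hN2 (by omega) (by omega) hp2
  have hτq : tauA (2 * n - 2) k (2 * n - 2 - p) = i :=
    tauA_val hN2 hi1 (by omega) (by omega) (by omega)
  refine build_path n hn G X Y hdisj hcov hX hY u x y huinj hxX hyY huxy
    (fun r => if r ≤ p then sigA (2 * n - 2) k r else tauA (2 * n - 2) k (r - p))
    (fun r => if r = 0 then 2 * n - 1 else if r < p then sigA (2 * n - 2) k (r + 1)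
      else if r = p then k else tauA (2 * n - 2) k (r - p))
    ?_ ?_ ?_ ?_ ?_ ?_ ?_
  · intro r _ _
    by_cases hrp : r ≤ p
    · simp only [if_pos hrp]; exact sigA_bounds hN2 k r
    · simp only [if_neg hrp]; exact tauA_bounds hN2 k (r - p)
  · intro a b ha1 ha2 hb1 hb2 h
    by_cases hap : a ≤ p <;> by_cases hbp : b ≤ p
    · simp only [if_pos hap, if_pos hbp] at h
      exact sigA_inj hN2 (by omega) (by omega) (by omega) (by omega) h
    · simp only [if_pos hap, if_neg hbp] at h
      have := sig_tau hN2 ha1 (by omega) (by omega) (by omega) hk1 h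
      omega
    · simp only [if_neg hap, if_pos hbp] at h
      have := sig_tau hN2 hb1 (by omega) (by omega) (by omega) hk1 h.symm
      omega
    · simp only [if_neg hap, if_neg hbp] at h
      have := tauA_inj hN2 (by omega) (by omega) (by omega) (by omega) h
      omega
  · intro r hr
    by_cases h0 : r = 0
    · simp only [if_pos h0]; omega
    · simp only [if_neg h0]
      by_cases h1 : r < p
      · simp only [if_pos h1]
        have := sigA_bounds hN2 k (r + 1); omega
      · simp only [if_neg h1]
        by_cases h2 : r = p
        · simp only [if_pos h2]; omega
        · simp only [if_neg h2]
          have := tauA_bounds hN2 k (r - p); omega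
  · intro a b ha hb h
    have hbnd : ∀ r, r ≤ 2 * n - 2 → r ≠ 0 →
        (if r < p then sigA (2 * n - 2) k (r + 1)
          else if r = p then k else tauA (2 * n - 2) k (r - p)) ≤ 2 * n - 2 := by
      intro r hr hr0
      by_cases h1 : r < p
      · simp only [if_pos h1]; exact (sigA_bounds hN2 k (r + 1)).2
      · simp only [if_neg h1]
        by_cases h2 : r = p
        · simp only [if_pos h2]; omega
        · simp only [if_neg h2]; exact (tauA_bounds hN2 k (r - p)).2
    by_cases h0 : a = 0 <;> by_cases h1 : b = 0
    · omega
    · exfalso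
      simp only [if_pos h0, if_neg h1] at h
      have := hbnd b hb h1; omega
    · exfalso
      simp only [if_pos h1, if_neg h0] at h
      have := hbnd a ha h0; omega
    · simp only [if_neg h0, if_neg h1] at h
      by_cases hap : a < p <;> by_cases hbp : b < p
      · simp only [if_pos hap, if_pos hbp] at h
        have := sigA_inj hN2 (show a + 1 ≤ k + (2 * n - 2) by omega)
          (show b + 1 ≤ k + (2 * n - 2) by omega) (by omega) (by omega) h
        omega
      · simp only [if_pos hap, if_neg hbp] at h
        by_cases hbq : b = p
        · simp only [if_pos hbq] at h
          have h' : sigA (2 * n - 2) k (a + 1) = sigA (2 * n - 2) k 1 :=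
            h.trans (sigA_one hN2 hk1 hk2).symm
          have := sigA_inj hN2 (show a + 1 ≤ k + (2 * n - 2) by omega)
            (by omega) (by omega) (by omega) h'
          omega
        · simp only [if_neg hbq] at h
          have := sig_tau hN2 (by omega) (by omega) (by omega) (by omega) hk1 h
          omega
      · simp only [if_neg hap, if_pos hbp] at h
        by_cases haq : a = p
        · simp only [if_pos haq] at h
          have h' : sigA (2 * n - 2) k (b + 1) = sigA (2 * n - 2) k 1 :=
            h.symm.trans (sigA_one hN2 hk1 hk2).symm
          have := sigA_inj hN2 (show b + 1 ≤ k + (2 * n - 2) by omega)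
            (by omega) (by omega) (by omega) h'
          omega
        · simp only [if_neg haq] at h
          have := sig_tau hN2 (by omega) (by omega) (by omega) (by omega) hk1 h.symm
          omega
      · simp only [if_neg hap, if_neg hbp] at h
        by_cases haq : a = p <;> by_cases hbq : b = p
        · omega
        · simp only [if_pos haq, if_neg hbq] at h
          have h' : tauA (2 * n - 2) k (b - p) = tauA (2 * n - 2) k (2 * n - 2) :=
            h.symm.trans (tauA_last hN2 hk1 hk2).symm
          have := tauA_inj hN2 (by omega) (by omega) (by omega) (by omega) h'
          omega
        · simp only [if_neg haq, if_pos hbq] at h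
          have h' : tauA (2 * n - 2) k (a - p) = tauA (2 * n - 2) k (2 * n - 2) :=
            h.trans (tauA_last hN2 hk1 hk2).symm
          have := tauA_inj hN2 (by omega) (by omega) (by omega) (by omega) h'
          omega
        · simp only [if_neg haq, if_neg hbq] at h
          have := tauA_inj hN2 (by omega) (by omega) (by omega) (by omega) h
          omega
  · simp only [if_pos rfl, if_pos (show (1:ℕ) ≤ p from hp1), sigA_one hN2 hk1 hk2]
    exact hxk
  · intro r h1 h2
    have h0 : r ≠ 0 := by omega
    simp only [if_neg h0]
    rcases lt_trichotomy r p with hrp | hrp | hrp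
    · simp only [if_pos hrp, if_pos (show r ≤ p by omega), if_pos (show r + 1 ≤ p by omega)]
      exact sig_step n hn G u hC hC2 k r hk1 (by omega) (by omega)
    · simp only [if_neg (show ¬ r < p by omega), if_pos hrp, if_pos (show r ≤ p by omega),
        if_neg (show ¬ r + 1 ≤ p by omega)]
      rw [hrp, hσp, show p + 1 - p = 1 by omega, tauA_one]
      exact hchord
    · simp only [if_neg (show ¬ r < p by omega), if_neg (show r ≠ p by omega),
        if_neg (show ¬ r ≤ p by omega), if_neg (show ¬ r + 1 ≤ p by omega)]
      have := tau_step n hn G u hC hC2 k (r - p) hk1 (by omega)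
      rw [show r - p + 1 = r + 1 - p by omega] at this
      exact this
  · have h0 : (2 * n - 2 : ℕ) ≠ 0 := by omega
    simp only [if_neg h0, if_neg (show ¬ 2 * n - 2 < p by omega),
      if_neg (show 2 * n - 2 ≠ p by omega), if_neg (show ¬ 2 * n - 2 ≤ p by omega), hτq]
    exact hiy

theorem stmt13 (n : ℕ) (hn : 3 ≤ n) (G : ℕ → SimpleGraph V) (X Y : Finset V)
    (hdisj : Disjoint X Y) (hcov : ∀ w : V, w ∈ X ∨ w ∈ Y)
    (hX : X.card = n) (hY : Y.card = n)
    (hbip : ∀ i, 1 ≤ i → i ≤ 2 * n - 1 → ∀ a b : V, (G i).Adj a b →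
      (a ∈ X ∧ b ∈ Y) ∨ (a ∈ Y ∧ b ∈ X))
    (hdeg : ∀ i, 1 ≤ i → i ≤ 2 * n - 1 → ∀ a : V, (n + 2) / 2 ≤ ((G i).neighborSet a).ncard)
    (u : ℕ → V) (x y : V)
    (huinj : Set.InjOn u (Set.Icc 1 (2 * n - 2)))
    (hxX : x ∈ X) (hyY : y ∈ Y)
    (huxy : ∀ i, 1 ≤ i → i ≤ 2 * n - 2 → u i ≠ x ∧ u i ≠ y)
    (hupar : ∀ i, 1 ≤ i → i ≤ 2 * n - 2 → (Odd i → u i ∈ X) ∧ (Even i → u i ∈ Y))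
    (hucov : ∀ w : V, w = x ∨ w = y ∨ ∃ i, 1 ≤ i ∧ i ≤ 2 * n - 2 ∧ u i = w)
    (hC : ∀ i, 1 ≤ i → i ≤ 2 * n - 3 → (G i).Adj (u i) (u (i + 1)))
    (hC2 : (G (2 * n - 2)).Adj (u (2 * n - 2)) (u 1))
    (hyin : n / 2 ≤ inDegD G n u y) :
    HasRainbowHamPathBetween G (2 * n - 1) n x y := by
  simp only [inDegD] at hyin
  have hN2 : 0 < 2 * n - 2 := by omega
  obtain ⟨w, hwadj, hwy⟩ : ∃ w, (G (2 * n - 1)).Adj x w ∧ w ≠ y := by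
    by_contra hno
    push_neg at hno
    have hsub : (G (2 * n - 1)).neighborSet x ⊆ {y} := by
      intro w hw
      rw [SimpleGraph.mem_neighborSet] at hw
      simp [hno w hw]
    have hle := Set.ncard_le_ncard hsub (Set.finite_singleton y)
    rw [Set.ncard_singleton] at hle
    have := hdeg (2 * n - 1) (by omega) (le_refl _) x
    omega
  have hwYmem : w ∈ Y := by
    rcases hbip (2 * n - 1) (by omega) (le_refl _) x w hwadj with ⟨_, h⟩ | ⟨h, _⟩
    · exact h
    · exact absurd h (Finset.disjoint_left.mp hdisj hxX)
  rcases hucov w with hwx | hwyy | ⟨k, hk1, hk2, rfl⟩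
  · rw [hwx] at hwadj
    exact absurd hwadj ((G (2 * n - 1)).loopless.irrefl x)
  · exact absurd hwyy hwy
  have hkeven : Even k := by
    rcases Nat.even_or_odd k with h | h
    · exact h
    · exact absurd hwYmem (Finset.disjoint_left.mp hdisj ((hupar k hk1 hk2).1 h))
  have hzlt : k % (2 * n - 2) < 2 * n - 2 := Nat.mod_lt _ hN2
  have hz1 : 1 ≤ k % (2 * n - 2) + 1 := by omega
  have hz2 : k % (2 * n - 2) + 1 ≤ 2 * n - 2 := by omega
  have hzodd : Odd (k % (2 * n - 2) + 1) := by
    rcases eq_or_ne k (2 * n - 2) with he | hne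
    · rw [he, Nat.mod_self]; exact odd_one
    · rw [Nat.mod_eq_of_lt (by omega)]; exact hkeven.add_one
  have hzX : u (k % (2 * n - 2) + 1) ∈ X := (hupar _ hz1 hz2).1 hzodd
  by_cases hA2 : (G k).Adj (u (k % (2 * n - 2) + 1)) y
  · exact buildA2 n hn G X Y hdisj hcov hX hY u x y huinj hxX hyY huxy hC hC2 k hk1 hk2
      hwadj hA2
  by_cases hc1 : ∃ i, Odd i ∧ 1 ≤ i ∧ i ≤ 2 * n - 3 ∧ (G i).Adj (u i) y ∧
      (G k).Adj (u (k % (2 * n - 2) + 1)) (u (i + 1))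
  · obtain ⟨i, hio, hi1, hi2, hiy, hch⟩ := hc1
    have hik : i ≠ k := by
      rcases hio with ⟨c, hc⟩; rcases hkeven with ⟨d, hd⟩; omega
    exact buildC1 n hn G X Y hdisj hcov hX hY u x y huinj hxX hyY huxy hC hC2 i k hi1 hi2
      hk1 hk2 hik hwadj hiy hch.symm
  exfalso
  push_neg at hc1
  set S : Set ℕ := {i : ℕ | Odd i ∧ 1 ≤ i ∧ i ≤ 2 * n - 3 ∧ (G i).Adj (u i) y ∧ y ≠ u (i + 1)}
    with hSdef
  have hSfin : S.Finite := Set.Finite.subset (Set.finite_Icc 1 (2 * n - 3))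
    (fun j hj => Set.mem_Icc.mpr ⟨hj.2.1, hj.2.2.1⟩)
  have hScard : n / 2 ≤ hSfin.toFinset.card := by
    rwa [Set.ncard_eq_toFinset_card _ hSfin] at hyin
  set E0 : Finset ℕ := (Finset.range (n - 1)).image (fun t => 2 * t + 2) with hE0def
  have hE0card : E0.card = n - 1 := by
    rw [hE0def, Finset.card_image_of_injOn (fun a _ b _ h => by omega), Finset.card_range]
  set Sf1 : Finset ℕ := hSfin.toFinset.image (fun i => i + 1) with hSf1def
  have hSf1card : Sf1.card = hSfin.toFinset.card := by
    rw [hSf1def, Finset.card_image_of_injOn (fun a _ b _ h => by omega)]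
  have hSf1sub : Sf1 ⊆ E0 := by
    intro j hj
    rw [hSf1def, Finset.mem_image] at hj
    obtain ⟨i, hi, rfl⟩ := hj
    rw [Set.Finite.mem_toFinset] at hi
    obtain ⟨⟨c, hc⟩, hi1, hi2, _⟩ := hi
    rw [hE0def, Finset.mem_image]
    exact ⟨c, Finset.mem_range.mpr (by omega), by omega⟩
  have hNBsub : (G k).neighborSet (u (k % (2 * n - 2) + 1)) ⊆ ↑((E0 \ Sf1).image u) := by
    intro w hw
    rw [SimpleGraph.mem_neighborSet] at hw
    have hwY2 : w ∈ Y := by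
      rcases hbip k (by omega) (by omega) _ w hw with ⟨_, h⟩ | ⟨h, _⟩
      · exact h
      · exact absurd h (Finset.disjoint_left.mp hdisj hzX)
    have hwx : w ≠ x := fun he => Finset.disjoint_left.mp hdisj hxX (he ▸ hwY2)
    have hwy2 : w ≠ y := fun he => hA2 (he ▸ hw)
    rcases hucov w with rfl | rfl | ⟨j, hj1, hj2, rfl⟩
    · exact absurd rfl hwx
    · exact absurd rfl hwy2
    · have hjeven : Even j := by
        rcases Nat.even_or_odd j with h | h
        · exact h
        · exact absurd hwY2 (Finset.disjoint_left.mp hdisj ((hupar j hj1 hj2).1 h))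
      rw [Finset.coe_image]
      refine Set.mem_image_of_mem u ?_
      rw [Finset.mem_coe, Finset.mem_sdiff]
      constructor
      · rw [hE0def, Finset.mem_image]
        obtain ⟨c, hc⟩ := hjeven
        exact ⟨c - 1, Finset.mem_range.mpr (by omega), by omega⟩
      · intro hjmem
        rw [hSf1def, Finset.mem_image] at hjmem
        obtain ⟨i, hi, hij⟩ := hjmem
        rw [Set.Finite.mem_toFinset, hSdef] at hi
        obtain ⟨hio, hi1, hi2, hiy, _⟩ := hi
        exact hc1 i hio hi1 hi2 hiy (hij ▸ hw)
  have hdegNB := hdeg k (by omega) (by omega) (u (k % (2 * n - 2) + 1))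
  have hle1 : ((G k).neighborSet (u (k % (2 * n - 2) + 1))).ncard ≤
      ((E0 \ Sf1).image u).card := by
    have := Set.ncard_le_ncard hNBsub (Finset.finite_toSet _)
    rwa [Set.ncard_coe_finset] at this
  have hle2 : ((E0 \ Sf1).image u).card ≤ (E0 \ Sf1).card := Finset.card_image_le
  have hle3 : (E0 \ Sf1).card = E0.card - Sf1.card := Finset.card_sdiff_of_subset hSf1sub
  omega
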